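/- If w is a prefix normal binary palindrome containing at least one 0, then w1 is not prefix normal. -/

import Mathlib

/-- A binary word (list of booleans, `true` = letter 1) is prefix normal if every
factor has at most as many 1s as the prefix of the same length. -/
def prefixNormal (w : List Bool) : Prop :=
  ∀ v : List Bool, v <:+: w → v.count true ≤ (w.take v.length).count true

/-- The word chain of a permutation σ of positions (0-indexed): `pnChain σ 0 = 1^n`
and `pnChain σ (k+1)` flips position `σ k` of `pnChain σ k` from 1 to 0.
(`pnChain σ k` corresponds to the paper's `c_σ[k+1]`.) -/
def pnChain {n : ℕ} (σ : Equiv.Perm (Fin n)) : ℕ → List Bool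
  | 0 => List.replicate n true
  | k + 1 => if h : k < n then (pnChain σ k).set (σ ⟨k, h⟩) false else pnChain σ k

/-- σ is a prefix normal word chain generator iff every word of its chain is prefix normal. -/
def isPNGen {n : ℕ} (σ : Equiv.Perm (Fin n)) : Prop :=
  ∀ k ≤ n, prefixNormal (pnChain σ k)

/-- Appending 1 to a prefix normal palindrome containing a 0 destroys prefix normality. -/
theorem palindrome_extension_critical (w : List Bool) (hpn : prefixNormal w)
    (hpal : w.reverse = w) (h0 : false ∈ w) :
    ¬ prefixNormal (w ++ [true]) := by
  intro h
  set a := (w.takeWhile (· == true)).length with ha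
  have ht : w.takeWhile (· == true) = List.replicate a true := by
    apply List.eq_replicate_of_mem
    intro b hb
    have := List.mem_takeWhile_imp hb
    simpa using this
  have hd : w.dropWhile (· == true) ≠ [] := by
    intro hnil
    have hw : w = w.takeWhile (· == true) := by
      conv_lhs => rw [← List.takeWhile_append_dropWhile (p := (· == true)) (l := w)]
      rw [hnil, List.append_nil]
    rw [hw, ht] at h0
    have := List.eq_of_mem_replicate h0
    simp at this
  have hhead : ((w.dropWhile (· == true)).head hd == true) = false :=
    List.head_dropWhile_not (· == true) (l := w) hd
  have hheadf : (w.dropWhile (· == true)).head hd = false := by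
    simpa using hhead
  set s := (w.dropWhile (· == true)).tail with hs
  have hw : w = List.replicate a true ++ false :: s := by
    conv_lhs => rw [← List.takeWhile_append_dropWhile (p := (· == true)) (l := w)]
    rw [ht, hs, ← hheadf, List.cons_head_tail]
  -- suffix of w: false :: replicate a true
  have hsuf : w = s.reverse ++ false :: List.replicate a true := by
    conv_lhs => rw [← hpal]
    rw [hw]
    simp [List.reverse_append]
  -- the factor 1^(a+1)
  have hfac : List.replicate (a + 1) true <:+: w ++ [true] := by
    refine List.IsSuffix.isInfix ⟨s.reverse ++ [false], ?_⟩
    rw [hsuf]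
    simp [List.replicate_succ' (n := a)]
  have := h _ hfac
  rw [List.length_replicate] at this
  have htake : (w ++ [true]).take (a + 1) = List.replicate a true ++ [false] := by
    rw [hw, List.append_assoc]
    have : a + 1 = (List.replicate a true).length + 1 := by simp
    rw [this, List.take_append]
    simp
  rw [htake] at this
  simp at this
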